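/- Let C be a category that is idempotent complete (every idempotent splits) and in which every hom-set X ⟶ Y is finite. Then every endomorphism has eventual image duality: for every object X of C and every endomorphism f : X ⟶ X, the diagram F_f : ℤ ⥤ C has a limit and a colimit, and the canonical comparison map from the limit to the colimit (the composite of the limit projection at index 0 with the colimit coprojection at index 0) is an isomorphism. -/

import Mathlib

open CategoryTheory CategoryTheory.Limits

/-- The diagram `ℤ ⥤ C` associated to an endomorphism `f : X ⟶ X`: every object is `X`
and the map `n ⟶ m` (for `n ≤ m`) is the `(m - n)`-fold composite of `f`. -/
def endoDiagram {C : Type*} [Category C] {X : C} (f : X ⟶ X) : ℤ ⥤ C where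
  obj _ := X
  map {n m} _ := (show CategoryTheory.End X from f) ^ (m - n).toNat
  map_id n := by
    simp only [sub_self, Int.toNat_zero, pow_zero]
    rfl
  map_comp {n m p} h₁ h₂ := by
    have hnm : n ≤ m := leOfHom h₁
    have hmp : m ≤ p := leOfHom h₂
    show (show CategoryTheory.End X from f) ^ (p - n).toNat =
      (show CategoryTheory.End X from f) ^ (p - m).toNat *
        (show CategoryTheory.End X from f) ^ (m - n).toNat
    rw [← pow_add]
    congr 1
    omega

namespace EvImAux

lemma exists_pow_idem {M : Type*} [Monoid M] [Finite M] (a : M) :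
    ∃ n : ℕ, 1 ≤ n ∧ a ^ n * a ^ n = a ^ n := by
  obtain ⟨x, y, hxy, h⟩ := Finite.exists_ne_map_eq_of_infinite (fun k : ℕ => a ^ k)
  wlog hlt : x < y generalizing x y
  · exact this y x hxy.symm h.symm (by omega)
  set m := x with hm
  set k := y - x with hk
  have hk1 : 1 ≤ k := by omega
  have hbase : a ^ (m + k) = a ^ m := by
    have : m + k = y := by omega
    rw [this]; exact h.symm
  have hstep : ∀ j, m ≤ j → a ^ (j + k) = a ^ j := by
    intro j hj
    obtain ⟨s, rfl⟩ := Nat.exists_eq_add_of_le hj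
    have h1 : m + s + k = (m + k) + s := by omega
    rw [h1, pow_add, hbase, ← pow_add]
  have hmult : ∀ (t : ℕ) (j : ℕ), m ≤ j → a ^ (j + t * k) = a ^ j := by
    intro t
    induction t with
    | zero => intro j _; simp
    | succ t ih =>
      intro j hj
      have h1 : j + (t + 1) * k = (j + t * k) + k := by ring
      rw [h1, hstep _ (by omega), ih j hj]
  refine ⟨k * (m + 1), Nat.one_le_iff_ne_zero.mpr (Nat.mul_ne_zero (by omega) (by omega)), ?_⟩
  rw [← pow_add]
  have h2 : k * (m + 1) + k * (m + 1) = k * (m + 1) + (m + 1) * k := by ring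
  rw [h2, hmult (m + 1) _ (by nlinarith)]

variable {C : Type*} [Category C] {X : C}

/-- `f` composed with itself `k` times, via the `End` monoid. -/
abbrev pw (f : X ⟶ X) (k : ℕ) : X ⟶ X := (show CategoryTheory.End X from f) ^ k

lemma pw_add (f : X ⟶ X) (a b : ℕ) : pw f (a + b) = pw f a ≫ pw f b := by
  show (show CategoryTheory.End X from f) ^ (a + b) = _
  rw [pow_add, pow_mul_comm]
  rfl

lemma endoDiagram_map (f : X ⟶ X) {a b : ℤ} (h : a ⟶ b) :
    (endoDiagram f).map h = pw f (b - a).toNat := rfl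

/-- All the data needed for the eventual image construction. -/
structure Setup (f : X ⟶ X) where
  n : ℕ
  hn : 1 ≤ n
  Y : C
  i : Y ⟶ X
  r : X ⟶ Y
  hir : i ≫ r = 𝟙 Y
  hri : r ≫ i = pw f n
  hidem : pw f n ≫ pw f n = pw f n

namespace Setup

variable {f : X ⟶ X} (S : Setup f)

def g : S.Y ⟶ S.Y := S.i ≫ f ≫ S.r

lemma i_pw_n : S.i ≫ pw f S.n = S.i := by
  rw [← S.hri, ← Category.assoc, S.hir, Category.id_comp]

lemma pw_n_r : pw f S.n ≫ S.r = S.r := by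
  rw [← S.hri, Category.assoc, S.hir, Category.comp_id]

lemma f_comm_pw (k : ℕ) : f ≫ pw f k = pw f k ≫ f := by
  have hf1 : pw f 1 = f := pow_one (show CategoryTheory.End X from f)
  have h1 : f ≫ pw f k = pw f (1 + k) := by rw [pw_add, hf1]
  have h2 : pw f k ≫ f = pw f (k + 1) := by rw [pw_add, hf1]
  rw [h1, h2, add_comm]

lemma i_f : S.i ≫ f = S.g ≫ S.i := by
  have : S.g ≫ S.i = S.i ≫ f ≫ pw f S.n := by
    simp only [g, Category.assoc, S.hri]
  rw [this, f_comm_pw, ← Category.assoc, i_pw_n]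

lemma f_r : f ≫ S.r = S.r ≫ S.g := by
  have : S.r ≫ S.g = pw f S.n ≫ f ≫ S.r := by
    simp only [g, ← Category.assoc, S.hri]
  rw [this, ← Category.assoc, ← f_comm_pw, Category.assoc, pw_n_r]

lemma i_pw (k : ℕ) : S.i ≫ pw f k = pw S.g k ≫ S.i := by
  induction k with
  | zero => simp [pw]
  | succ k ih =>
    have hf1 : pw f 1 = f := pow_one (show CategoryTheory.End X from f)
    have hg1 : pw S.g 1 = S.g := pow_one (show CategoryTheory.End S.Y from S.g)
    calc S.i ≫ pw f (k + 1) = S.i ≫ pw f k ≫ pw f 1 := by rw [pw_add]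
      _ = (S.i ≫ pw f k) ≫ f := by rw [hf1, Category.assoc]
      _ = pw S.g k ≫ S.i ≫ f := by rw [ih, Category.assoc]
      _ = pw S.g k ≫ S.g ≫ S.i := by rw [S.i_f]
      _ = (pw S.g k ≫ pw S.g 1) ≫ S.i := by rw [hg1, Category.assoc]
      _ = pw S.g (k + 1) ≫ S.i := by rw [← pw_add]

lemma pw_r (k : ℕ) : pw f k ≫ S.r = S.r ≫ pw S.g k := by
  induction k with
  | zero => simp [pw]
  | succ k ih =>
    have hf1 : pw f 1 = f := pow_one (show CategoryTheory.End X from f)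
    have hg1 : pw S.g 1 = S.g := pow_one (show CategoryTheory.End S.Y from S.g)
    calc pw f (k + 1) ≫ S.r = (pw f k ≫ pw f 1) ≫ S.r := by rw [pw_add]
      _ = pw f k ≫ f ≫ S.r := by rw [hf1, Category.assoc]
      _ = pw f k ≫ S.r ≫ S.g := by rw [S.f_r]
      _ = (S.r ≫ pw S.g k) ≫ S.g := by rw [← Category.assoc, ih]
      _ = S.r ≫ pw S.g k ≫ pw S.g 1 := by rw [hg1, Category.assoc]
      _ = S.r ≫ pw S.g (k + 1) := by rw [← pw_add]

lemma g_pow_n : pw S.g S.n = 𝟙 S.Y := by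
  have h1 : S.r ≫ pw S.g S.n = S.r := by
    rw [← pw_r, ← S.hri, Category.assoc, S.hir, Category.comp_id]
  calc pw S.g S.n = (S.i ≫ S.r) ≫ pw S.g S.n := by rw [S.hir, Category.id_comp]
    _ = S.i ≫ S.r := by rw [Category.assoc, h1]
    _ = 𝟙 S.Y := S.hir

/-- `g` as a unit of `End Y`. -/
def u : (CategoryTheory.End S.Y)ˣ where
  val := (show CategoryTheory.End S.Y from S.g)
  inv := (show CategoryTheory.End S.Y from S.g) ^ (S.n - 1)
  val_inv := by
    rw [← pow_succ']
    have hn := S.hn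
    have : S.n - 1 + 1 = S.n := by omega
    rw [this]
    exact S.g_pow_n
  inv_val := by
    rw [← pow_succ]
    have hn := S.hn
    have : S.n - 1 + 1 = S.n := by omega
    rw [this]
    exact S.g_pow_n

def G (m : ℤ) : S.Y ⟶ S.Y := ((S.u ^ m : (CategoryTheory.End S.Y)ˣ) : CategoryTheory.End S.Y)

lemma G_add (a b : ℤ) : S.G (a + b) = S.G a ≫ S.G b := by
  show ((S.u ^ (a + b) : (CategoryTheory.End S.Y)ˣ) : CategoryTheory.End S.Y) = _
  rw [add_comm, zpow_add]
  rfl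

lemma G_natCast (k : ℕ) : S.G (k : ℤ) = pw S.g k := by
  show ((S.u ^ (k : ℤ) : (CategoryTheory.End S.Y)ˣ) : CategoryTheory.End S.Y) = _
  rw [zpow_natCast, Units.val_pow_eq_pow_val]
  rfl

lemma G_zero : S.G 0 = 𝟙 S.Y := by
  have := S.G_natCast 0
  simpa using this

lemma u_pow_n : S.u ^ (S.n : ℤ) = 1 := by
  ext
  rw [zpow_natCast, Units.val_pow_eq_pow_val, Units.val_one]
  exact S.g_pow_n

lemma G_shift (m : ℤ) (t : ℕ) : S.G (m + t * S.n) = S.G m := by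
  show ((S.u ^ (m + t * S.n) : (CategoryTheory.End S.Y)ˣ) : CategoryTheory.End S.Y) = _
  rw [zpow_add, show ((t : ℤ) * S.n) = (S.n : ℤ) * t by ring, zpow_mul, S.u_pow_n, one_zpow,
    mul_one]
  rfl

lemma G_eq_pw (m : ℤ) (t k : ℕ) (hk : (k : ℤ) = m + t * S.n) : S.G m = pw S.g k := by
  rw [← S.G_shift m t, ← hk, S.G_natCast]

/-- The limit cone. -/
noncomputable def cone : Cone (endoDiagram f) where
  pt := S.Y
  π :=
    { app := fun m => S.G m ≫ S.i
      naturality := fun a b h => by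
        have hab : a ≤ b := leOfHom h
        have hba : a + (((b - a).toNat : ℕ) : ℤ) = b := by omega
        dsimp
        erw [Category.id_comp, endoDiagram_map, Category.assoc, S.i_pw, ← S.G_natCast,
          ← Category.assoc, ← S.G_add, hba] }

/-- The colimit cocone. -/
noncomputable def cocone : Cocone (endoDiagram f) where
  pt := S.Y
  ι :=
    { app := fun m => S.r ≫ S.G (-m)
      naturality := fun a b h => by
        have hab : a ≤ b := leOfHom h
        have hba : (((b - a).toNat : ℕ) : ℤ) + -b = -a := by omega
        dsimp
        erw [Category.comp_id, endoDiagram_map, ← Category.assoc, S.pw_r, ← S.G_natCast,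
          Category.assoc, ← S.G_add, hba] }

lemma cone_succ (s : Cone (endoDiagram f)) (m : ℤ) :
    s.π.app (m + S.n) = s.π.app m ≫ pw f S.n := by
  have hw := s.w (homOfLE (show m ≤ m + (S.n : ℤ) by omega))
  rw [endoDiagram_map, show (m + (S.n : ℤ) - m).toNat = S.n from by omega] at hw
  exact hw.symm

lemma cone_stab (s : Cone (endoDiagram f)) (m : ℤ) :
    s.π.app m ≫ pw f S.n = s.π.app m := by
  have h1 := S.cone_succ s (m - S.n)
  rw [show m - (S.n : ℤ) + S.n = m from by omega] at h1
  conv_lhs => rw [h1]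
  erw [Category.assoc, S.hidem, ← h1]

lemma cone_shift (s : Cone (endoDiagram f)) (t : ℕ) (m : ℤ) :
    s.π.app (m + t * S.n) = s.π.app m := by
  induction t with
  | zero => congr 1; push_cast; ring
  | succ t ih =>
    have key : m + ((t + 1 : ℕ) : ℤ) * S.n = (m + (t : ℤ) * S.n) + S.n := by push_cast; ring
    erw [key, S.cone_succ s, ih, S.cone_stab s]

lemma cone_from_zero (s : Cone (endoDiagram f)) (k : ℕ) :
    s.π.app 0 ≫ pw f k = s.π.app (k : ℤ) := by
  have hw := s.w (homOfLE (show (0 : ℤ) ≤ (k : ℤ) by omega))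
  rw [endoDiagram_map, show ((k : ℤ) - 0).toNat = k from by omega] at hw
  exact hw

noncomputable def isLimit : IsLimit S.cone where
  lift s := s.π.app 0 ≫ S.r
  fac s m := by
    dsimp [cone]
    set t : ℕ := m.natAbs with ht
    have hnn : (0 : ℤ) ≤ m + t * S.n := by
      have h3 : (t : ℤ) ≤ (t : ℤ) * S.n := by
        nlinarith [Int.natCast_nonneg t, show (1 : ℤ) ≤ (S.n : ℤ) by exact_mod_cast S.hn]
      omega
    set k : ℕ := (m + t * S.n).toNat with hkdef
    have hk : (k : ℤ) = m + t * S.n := Int.toNat_of_nonneg hnn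
    rw [S.G_eq_pw m t k hk]
    have e : ((k + S.n : ℕ) : ℤ) = m + ((t + 1 : ℕ) : ℤ) * S.n := by
      push_cast
      rw [hk]
      ring
    have h := cone_from_zero s (k + S.n)
    erw [e, S.cone_shift s (t + 1) m] at h
    refine Eq.trans ?_ h
    calc @Eq (s.pt ⟶ X) ((s.π.app 0 ≫ S.r) ≫ pw S.g k ≫ S.i) (s.π.app 0 ≫ (S.r ≫ pw S.g k) ≫ S.i) := by dsimp only [endoDiagram, Functor.const_obj_obj]; simp only [Category.assoc]
      @Eq (s.pt ⟶ X) _ (s.π.app 0 ≫ pw f k ≫ S.r ≫ S.i) := by dsimp only [endoDiagram, Functor.const_obj_obj]; rw [← S.pw_r]; simp only [Category.assoc]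
      @Eq (s.pt ⟶ X) _ (s.π.app 0 ≫ pw f k ≫ pw f S.n) := by dsimp only [endoDiagram, Functor.const_obj_obj]; rw [S.hri]
      @Eq (s.pt ⟶ X) _ (s.π.app 0 ≫ pw f (k + S.n)) := by dsimp only [endoDiagram, Functor.const_obj_obj]; rw [pw_add]
  uniq s w hw := by
    have h0 := hw 0
    dsimp [cone] at h0
    erw [S.G_zero, Category.id_comp] at h0
    show w = s.π.app 0 ≫ S.r
    erw [← h0, Category.assoc, S.hir, Category.comp_id]

lemma cocone_succ (s : Cocone (endoDiagram f)) (m : ℤ) :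
    s.ι.app (m - S.n) = pw f S.n ≫ s.ι.app m := by
  have hw := s.w (homOfLE (show m - (S.n : ℤ) ≤ m by omega))
  rw [endoDiagram_map, show (m - (m - (S.n : ℤ))).toNat = S.n from by omega] at hw
  exact hw.symm

lemma cocone_stab (s : Cocone (endoDiagram f)) (m : ℤ) :
    pw f S.n ≫ s.ι.app m = s.ι.app m := by
  have h1 := S.cocone_succ s (m + S.n)
  rw [show m + (S.n : ℤ) - S.n = m from by omega] at h1
  conv_lhs => rw [h1]
  erw [← Category.assoc, S.hidem, ← h1]

lemma cocone_shift (s : Cocone (endoDiagram f)) (t : ℕ) (m : ℤ) :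
    s.ι.app (m - t * S.n) = s.ι.app m := by
  induction t with
  | zero => congr 1; push_cast; ring
  | succ t ih =>
    have key : m - ((t + 1 : ℕ) : ℤ) * S.n = (m - (t : ℤ) * S.n) - S.n := by push_cast; ring
    rw [key, S.cocone_succ s, ih, S.cocone_stab s]

lemma cocone_to_zero (s : Cocone (endoDiagram f)) (k : ℕ) :
    pw f k ≫ s.ι.app 0 = s.ι.app (-(k : ℤ)) := by
  have hw := s.w (homOfLE (show -(k : ℤ) ≤ (0 : ℤ) by omega))
  rw [endoDiagram_map, show ((0 : ℤ) - -(k : ℤ)).toNat = k from by omega] at hw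
  exact hw

noncomputable def isColimit : IsColimit S.cocone where
  desc s := S.i ≫ s.ι.app 0
  fac s m := by
    dsimp [cocone]
    set t : ℕ := m.natAbs with ht
    have hnn : (0 : ℤ) ≤ -m + t * S.n := by
      have h3 : (t : ℤ) ≤ (t : ℤ) * S.n := by
        nlinarith [Int.natCast_nonneg t, show (1 : ℤ) ≤ (S.n : ℤ) by exact_mod_cast S.hn]
      omega
    set k : ℕ := (-m + t * S.n).toNat with hkdef
    have hk : (k : ℤ) = -m + t * S.n := Int.toNat_of_nonneg hnn
    rw [S.G_eq_pw (-m) t k hk]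
    have e : -((k + S.n : ℕ) : ℤ) = m - ((t + 1 : ℕ) : ℤ) * S.n := by
      push_cast
      rw [hk]
      ring
    have h := cocone_to_zero s (k + S.n)
    erw [e, S.cocone_shift s (t + 1) m] at h
    refine Eq.trans ?_ h
    calc @Eq (X ⟶ s.pt) ((S.r ≫ pw S.g k) ≫ S.i ≫ s.ι.app 0) ((pw f k ≫ S.r) ≫ S.i ≫ s.ι.app 0) := by rw [← S.pw_r]
      @Eq (X ⟶ s.pt) _ (pw f k ≫ pw f S.n ≫ s.ι.app 0) := by
          dsimp only [endoDiagram, Functor.const_obj_obj]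
          rw [Category.assoc, ← Category.assoc S.r, S.hri]
      @Eq (X ⟶ s.pt) _ (pw f (k + S.n) ≫ s.ι.app 0) := by dsimp only [endoDiagram, Functor.const_obj_obj]; rw [pw_add, Category.assoc]
  uniq s w hw := by
    have h0 := hw 0
    dsimp [cocone] at h0
    erw [S.G_zero, Category.comp_id] at h0
    show w = S.i ≫ s.ι.app 0
    erw [← h0, ← Category.assoc, S.hir, Category.id_comp]

lemma comparison_eq : S.cone.π.app 0 ≫ S.cocone.ι.app 0 = 𝟙 S.Y := by
  dsimp [cone, cocone]
  simp only [S.G_zero, Category.id_comp, Category.comp_id]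
  erw [Category.id_comp, Category.comp_id]
  exact S.hir

end Setup

end EvImAux

theorem eventual_image_duality_of_idempotentComplete_of_finite_homs
    {C : Type*} [Category C] [IsIdempotentComplete C]
    (hfin : ∀ X Y : C, Finite (X ⟶ Y)) (X : C) (f : X ⟶ X) :
    HasLimit (endoDiagram f) ∧ HasColimit (endoDiagram f) ∧
      ∀ (h₁ : HasLimit (endoDiagram f)) (h₂ : HasColimit (endoDiagram f)),
        IsIso (@limit.π ℤ _ C _ (endoDiagram f) h₁ (0 : ℤ) ≫
          @colimit.ι ℤ _ C _ (endoDiagram f) h₂ (0 : ℤ)) := by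
  have : Finite (CategoryTheory.End X) := hfin X X
  obtain ⟨n, hn, hidem⟩ := EvImAux.exists_pow_idem (show CategoryTheory.End X from f)
  obtain ⟨Y, i, r, hir, hri⟩ :=
    IsIdempotentComplete.idempotents_split X (EvImAux.pw f n) hidem
  let S : EvImAux.Setup f :=
    { n := n, hn := hn, Y := Y, i := i, r := r, hir := hir, hri := hri, hidem := hidem }
  have hL : HasLimit (endoDiagram f) := HasLimit.mk ⟨S.cone, S.isLimit⟩
  have hC : HasColimit (endoDiagram f) := HasColimit.mk ⟨S.cocone, S.isColimit⟩
  refine ⟨hL, hC, ?_⟩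
  intro h₁ h₂
  have e1 : @limit.π ℤ _ C _ (endoDiagram f) h₁ (0 : ℤ) =
      (limit.isoLimitCone (F := endoDiagram f) ⟨S.cone, S.isLimit⟩).hom ≫ S.cone.π.app 0 :=
    (limit.isoLimitCone_hom_π (C := C) ⟨S.cone, S.isLimit⟩ (0 : ℤ)).symm
  have e2 : S.cocone.ι.app 0 ≫
      (colimit.isoColimitCocone (F := endoDiagram f) ⟨S.cocone, S.isColimit⟩).inv =
      @colimit.ι ℤ _ C _ (endoDiagram f) h₂ (0 : ℤ) :=
    colimit.isoColimitCocone_ι_inv (C := C) ⟨S.cocone, S.isColimit⟩ (0 : ℤ)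
  rw [e1, ← e2, Category.assoc, ← Category.assoc (S.cone.π.app 0), S.comparison_eq]
  have i1 : IsIso (limit.isoLimitCone (F := endoDiagram f)
      ⟨S.cone, S.isLimit⟩).hom := inferInstance
  have i2 : IsIso (colimit.isoColimitCocone (F := endoDiagram f)
      ⟨S.cocone, S.isColimit⟩).inv := inferInstance
  exact IsIso.comp_isIso' i1 (IsIso.comp_isIso' (IsIso.id S.Y) i2)
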